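/- There is an absolute constant δ > 0 such that for every ρ ∈ [−1,1] with |ρ − ρ*| ≥ 0.01, one has 1 + (2/π)·arcsin(ρ) ≥ (α_GW + δ)·(1 + ρ). -/

import Mathlib

/-- The Goemans–Williamson ratio function `f(ρ) = (1 + (2/π) arcsin ρ)/(1+ρ)`. -/
noncomputable def gwRatio (ρ : ℝ) : ℝ := (1 + 2 / Real.pi * Real.arcsin ρ) / (1 + ρ)

/-- The Goemans–Williamson constant `α_GW = min_{ρ ∈ (-1,1]} (1 + (2/π) arcsin ρ)/(1+ρ)`. -/
noncomputable def alphaGW : ℝ := sInf (gwRatio '' Set.Ioc (-1 : ℝ) 1)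

open Real Set

namespace GWAux

lemma sqrt2_gt_one : (1:ℝ) < Real.sqrt 2 := by
  nlinarith [Real.sq_sqrt (by norm_num : (0:ℝ) ≤ 2), Real.sqrt_nonneg 2]

noncomputable def Tf (u : ℝ) : ℝ := Real.tan u - 2 * u

lemma Tf_neg_of_le_pi4 {u : ℝ} (h0 : 0 < u) (h1 : u ≤ π/4) : Tf u < 0 := by
  have hcos : Real.cos (π/4) ≤ Real.cos u :=
    Real.cos_le_cos_of_nonneg_of_le_pi h0.le (by linarith [Real.pi_pos]) h1
  rw [Real.cos_pi_div_four] at hcos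
  have hcpos : 0 < Real.cos u := lt_of_lt_of_le (by positivity) hcos
  have hsin : Real.sin u < u := Real.sin_lt h0
  have hs2 := sqrt2_gt_one
  have h2 : Real.sin u < 2 * u * Real.cos u := by nlinarith
  have : Real.tan u < 2 * u := by
    rw [Real.tan_eq_sin_div_cos, div_lt_iff₀ hcpos]; linarith
  simp only [Tf]; linarith

lemma Tf_strictMonoOn : StrictMonoOn Tf (Ico (π/4) (π/2)) := by
  have hsub : Ico (π/4) (π/2) ⊆ {x : ℝ | Real.cos x ≠ 0} := by
    intro x hx
    exact ne_of_gt (Real.cos_pos_of_mem_Ioo ⟨by linarith [hx.1, Real.pi_pos], hx.2⟩)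
  apply strictMonoOn_of_deriv_pos (convex_Ico _ _)
  · exact (Real.continuousOn_tan.mono hsub).sub (continuous_const.mul continuous_id).continuousOn
  · intro x hx
    rw [interior_Ico] at hx
    have hcpos : 0 < Real.cos x := Real.cos_pos_of_mem_Ioo ⟨by linarith [hx.1, Real.pi_pos], hx.2⟩
    have hd2 : HasDerivAt (fun u : ℝ => 2 * u) 2 x := by
      simpa using (hasDerivAt_id x).const_mul (2:ℝ)
    have hd : HasDerivAt Tf (1 / Real.cos x ^ 2 - 2) x :=
      (Real.hasDerivAt_tan hcpos.ne').sub hd2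
    rw [hd.deriv]
    have hcos : Real.cos x < Real.cos (π/4) :=
      Real.cos_lt_cos_of_nonneg_of_le_pi (by linarith [Real.pi_pos])
        (by linarith [hx.2, Real.pi_pos]) hx.1
    rw [Real.cos_pi_div_four] at hcos
    have hs2 := sqrt2_gt_one
    have h2 : Real.cos x ^ 2 < 1/2 := by
      nlinarith [Real.sq_sqrt (by norm_num : (0:ℝ) ≤ 2), Real.sqrt_nonneg 2]
    have : 2 < 1 / Real.cos x ^ 2 := by
      rw [lt_div_iff₀ (by positivity)]; nlinarith
    linarith

lemma Tf_pos_14 : 0 < Tf 1.4 := by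
  have hpi1 : π > 3.141592 := Real.pi_gt_d6
  have hpi2 : π < 3.141593 := Real.pi_lt_d6
  have hcpos : 0 < Real.cos 1.4 := Real.cos_pos_of_mem_Ioo ⟨by linarith, by linarith⟩
  have hcos : Real.cos 1.4 < π/2 - 1.4 := by
    have := Real.sin_lt (x := π/2 - 1.4) (by linarith)
    rwa [Real.sin_pi_div_two_sub] at this
  have hsin : Real.sin (π/4) < Real.sin 1.4 :=
    Real.sin_lt_sin_of_lt_of_le_pi_div_two (by linarith) (by linarith) (by linarith)
  rw [Real.sin_pi_div_four] at hsin
  have hs2 := sqrt2_gt_one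
  have h1 : 2 * 1.4 * Real.cos 1.4 < Real.sin 1.4 := by nlinarith
  have : 2 * 1.4 < Real.tan 1.4 := by
    rw [Real.tan_eq_sin_div_cos, lt_div_iff₀ hcpos]; linarith
  simp only [Tf]; norm_num at this ⊢; linarith

lemma exists_ustar : ∃ u : ℝ, u ∈ Ioo (π/4) 1.4 ∧ Tf u = 0 := by
  have hpi1 : π > 3.141592 := Real.pi_gt_d6
  have hpi2 : π < 3.141593 := Real.pi_lt_d6
  have hcont : ContinuousOn Tf (Icc (π/4) 1.4) := by
    apply ContinuousOn.sub
    · apply Real.continuousOn_tan.mono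
      intro x hx
      exact ne_of_gt (Real.cos_pos_of_mem_Ioo ⟨by linarith [hx.1], by linarith [hx.2]⟩)
    · exact (continuous_const.mul continuous_id).continuousOn
  have h0 : (0:ℝ) ∈ Ioo (Tf (π/4)) (Tf 1.4) := by
    constructor
    · have : Tf (π/4) < 0 := Tf_neg_of_le_pi4 (by linarith) le_rfl
      linarith
    · exact Tf_pos_14
  have := intermediate_value_Ioo (by linarith : π/4 ≤ (1.4:ℝ)) hcont h0
  obtain ⟨u, hu, hTu⟩ := this
  exact ⟨u, hu, hTu⟩

noncomputable def Ff (u : ℝ) : ℝ := u / Real.sin u ^ 2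

lemma pi2_lt : (1.4:ℝ) < π/2 := by
  have : π > 3.141592 := Real.pi_gt_d6; linarith

lemma Tf_sign {c u : ℝ} (hc : c ∈ Ioo (π/4) 1.4) (hTc : Tf c = 0) (h0 : 0 < u)
    (h2 : u < π/2) : (u < c → Tf u < 0) ∧ (c < u → 0 < Tf u) := by
  constructor
  · intro hu
    rcases le_or_gt u (π/4) with h | h
    · exact Tf_neg_of_le_pi4 h0 h
    · have := Tf_strictMonoOn (Set.mem_Ico.2 ⟨h.le, h2⟩)
        (Set.mem_Ico.2 ⟨hc.1.le, by linarith [pi2_lt, hc.2]⟩) hu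
      linarith [hTc]
  · intro hu
    have := Tf_strictMonoOn (Set.mem_Ico.2 ⟨hc.1.le, by linarith [pi2_lt, hc.2]⟩)
      (Set.mem_Ico.2 ⟨by linarith [hc.1], h2⟩) hu
    linarith [hTc]

lemma Ff_hasDeriv {u : ℝ} (h0 : 0 < u) (h2 : u < π/2) :
    HasDerivAt Ff ((Real.sin u * Real.cos u * Tf u) / (Real.sin u ^ 2) ^ 2) u := by
  have hs : 0 < Real.sin u := Real.sin_pos_of_pos_of_lt_pi h0 (by linarith [Real.pi_pos])
  have hc : 0 < Real.cos u := Real.cos_pos_of_mem_Ioo ⟨by linarith [Real.pi_pos], h2⟩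
  have hd : HasDerivAt (fun x : ℝ => Real.sin x ^ 2) (2 * Real.sin u ^ 1 * Real.cos u) u :=
    (Real.hasDerivAt_sin u).pow 2
  have : HasDerivAt Ff ((1 * Real.sin u ^ 2 - u * (2 * Real.sin u ^ 1 * Real.cos u)) / (Real.sin u ^ 2) ^ 2) u :=
    (hasDerivAt_id' u).div hd (by positivity)
  convert this using 1
  simp only [Tf, Real.tan_eq_sin_div_cos, id]
  field_simp

lemma Ff_anti {c : ℝ} (hc : c ∈ Ioo (π/4) 1.4) (hTc : Tf c = 0) :
    StrictAntiOn Ff (Ioc 0 c) := by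
  apply strictAntiOn_of_deriv_neg (convex_Ioc _ _)
  · apply ContinuousOn.div continuousOn_id (Real.continuous_sin.pow 2).continuousOn
    intro x hx
    have : 0 < Real.sin x := Real.sin_pos_of_pos_of_lt_pi hx.1
      (by linarith [hx.2, hc.2, pi2_lt, Real.pi_pos])
    exact pow_ne_zero 2 this.ne'
  · intro u hu
    rw [interior_Ioc] at hu
    have h2 : u < π/2 := by linarith [hu.2, hc.2, pi2_lt]
    rw [(Ff_hasDeriv hu.1 h2).deriv]
    have hs : 0 < Real.sin u := Real.sin_pos_of_pos_of_lt_pi hu.1 (by linarith [Real.pi_pos])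
    have hcc : 0 < Real.cos u := Real.cos_pos_of_mem_Ioo ⟨by linarith [hu.1, Real.pi_pos], h2⟩
    have hT : Tf u < 0 := (Tf_sign hc hTc hu.1 h2).1 hu.2
    apply div_neg_of_neg_of_pos
    · exact mul_neg_of_pos_of_neg (mul_pos hs hcc) hT
    · positivity

lemma Ff_mono {c : ℝ} (hc : c ∈ Ioo (π/4) 1.4) (hTc : Tf c = 0) :
    StrictMonoOn Ff (Icc c (π/2)) := by
  apply strictMonoOn_of_deriv_pos (convex_Icc _ _)
  · apply ContinuousOn.div continuousOn_id (Real.continuous_sin.pow 2).continuousOn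
    intro x hx
    have : 0 < Real.sin x := Real.sin_pos_of_pos_of_lt_pi
      (by linarith [hx.1, hc.1, Real.pi_pos]) (by linarith [hx.2, Real.pi_pos])
    exact pow_ne_zero 2 this.ne'
  · intro u hu
    rw [interior_Icc] at hu
    have h0 : 0 < u := by linarith [hu.1, hc.1, Real.pi_pos]
    rw [(Ff_hasDeriv h0 hu.2).deriv]
    have hs : 0 < Real.sin u := Real.sin_pos_of_pos_of_lt_pi h0 (by linarith [hu.2, Real.pi_pos])
    have hcc : 0 < Real.cos u := Real.cos_pos_of_mem_Ioo ⟨by linarith [h0, Real.pi_pos], hu.2⟩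
    have hT : 0 < Tf u := (Tf_sign hc hTc h0 hu.2).2 hu.1
    apply div_pos (by positivity) (by positivity)

lemma sin_sq_u {ρ : ℝ} (h1 : -1 ≤ ρ) (h2 : ρ ≤ 1) :
    Real.sin (π/4 + Real.arcsin ρ/2) ^ 2 = (1 + ρ)/2 := by
  have hcos : Real.cos (2 * (π/4 + Real.arcsin ρ/2)) = -ρ := by
    have h : 2 * (π/4 + Real.arcsin ρ/2) = π/2 + Real.arcsin ρ := by ring
    rw [h, Real.cos_add, Real.cos_pi_div_two, Real.sin_pi_div_two, Real.sin_arcsin h1 h2]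
    ring
  have h2m := Real.cos_two_mul (π/4 + Real.arcsin ρ/2)
  have hpyth := Real.sin_sq_add_cos_sq (π/4 + Real.arcsin ρ/2)
  rw [hcos] at h2m
  linarith

lemma gwRatio_eq {ρ : ℝ} (h1 : -1 < ρ) (h2 : ρ ≤ 1) :
    gwRatio ρ = (2/π) * Ff (π/4 + Real.arcsin ρ/2) := by
  have hsq := sin_sq_u h1.le h2
  have hπ : (0:ℝ) < π := Real.pi_pos
  have hρ : (1:ℝ) + ρ ≠ 0 := by linarith
  simp only [gwRatio, Ff]
  rw [hsq]
  field_simp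
  ring

lemma u_pos {ρ : ℝ} (h1 : -1 < ρ) : 0 < π/4 + Real.arcsin ρ/2 := by
  have := Real.neg_pi_div_two_lt_arcsin.2 h1
  linarith

lemma u_le {ρ : ℝ} : π/4 + Real.arcsin ρ/2 ≤ π/2 := by
  have := Real.arcsin_le_pi_div_two ρ
  linarith

lemma gw_key : ∃ c : ℝ, 0 < c ∧ c ≤ 0.95 ∧
    (∀ ρ1 ρ2 : ℝ, -1 < ρ1 → ρ1 < ρ2 → ρ2 ≤ c → gwRatio ρ2 < gwRatio ρ1) ∧
    (∀ ρ1 ρ2 : ℝ, c ≤ ρ1 → ρ1 < ρ2 → ρ2 ≤ 1 → gwRatio ρ1 < gwRatio ρ2) := by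
  obtain ⟨u, hu, hTu⟩ := exists_ustar
  have hpi1 : π > 3.141592 := Real.pi_gt_d6
  have hpi2 : π < 3.141593 := Real.pi_lt_d6
  set c : ℝ := -Real.cos (2*u) with hc_def
  have hc0 : 0 < c := by
    have : Real.cos (2*u) < 0 :=
      Real.cos_neg_of_pi_div_two_lt_of_lt (by linarith [hu.1]) (by linarith [hu.2])
    simp only [hc_def]; linarith
  have hc95 : c ≤ 0.95 := by
    have h1 : Real.cos 2.8 ≤ Real.cos (2*u) :=
      Real.cos_le_cos_of_nonneg_of_le_pi (by linarith [hu.1]) (by linarith) (by linarith [hu.2])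
    have h2 : -Real.cos 2.8 = Real.cos (π - 2.8) := by rw [Real.cos_pi_sub]
    have hx1 : (0.34:ℝ) ≤ π - 2.8 := by linarith
    have hx2 : π - 2.8 ≤ 0.3416 := by linarith
    have hb := Real.cos_bound (x := π - 2.8) (by rw [abs_of_nonneg (by linarith)]; linarith)
    rw [abs_of_nonneg (by linarith : (0:ℝ) ≤ π - 2.8)] at hb
    have hb' := abs_le.1 hb
    have hy2l : (0.1156:ℝ) ≤ (π - 2.8)^2 := by nlinarith
    have hy2u : (π - 2.8)^2 ≤ (0.3416:ℝ)^2 := by nlinarith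
    have hy4 : (π - 2.8)^4 ≤ (0.3416:ℝ)^4 := by nlinarith [sq_nonneg ((π-2.8)^2)]
    have : Real.cos (π - 2.8) ≤ 0.95 := by nlinarith [hb'.2]
    simp only [hc_def]; linarith
  have harcsin : Real.arcsin c = 2*u - π/2 := by
    have hsin : Real.sin (2*u - π/2) = c := by rw [Real.sin_sub_pi_div_two]
    rw [← hsin, Real.arcsin_sin (by linarith [hu.1]) (by linarith [hu.2])]
  have hcu : π/4 + Real.arcsin c/2 = u := by rw [harcsin]; ring
  have hc1 : c ≤ 1 := by linarith
  refine ⟨c, hc0, hc95, ?_, ?_⟩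
  · intro ρ1 ρ2 h1 h12 h2c
    have hρ1le : ρ1 ≤ 1 := by linarith
    have hρ2le : ρ2 ≤ 1 := by linarith
    have hu12 : π/4 + Real.arcsin ρ1/2 < π/4 + Real.arcsin ρ2/2 := by
      have := Real.strictMonoOn_arcsin ⟨h1.le, hρ1le⟩ ⟨by linarith, hρ2le⟩ h12
      linarith
    have hu2u : π/4 + Real.arcsin ρ2/2 ≤ u := by
      have := Real.monotone_arcsin h2c
      rw [harcsin] at this; linarith
    have hF := Ff_anti hu hTu
      (Set.mem_Ioc.2 ⟨u_pos h1, by linarith⟩)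
      (Set.mem_Ioc.2 ⟨u_pos (by linarith), hu2u⟩) hu12
    rw [gwRatio_eq h1 hρ1le, gwRatio_eq (by linarith) hρ2le]
    have h2π : (0:ℝ) < 2/π := by positivity
    exact mul_lt_mul_of_pos_left hF h2π
  · intro ρ1 ρ2 h1c h12 h2le
    have h1m : -1 < ρ1 := by linarith
    have hu12 : π/4 + Real.arcsin ρ1/2 < π/4 + Real.arcsin ρ2/2 := by
      have := Real.strictMonoOn_arcsin ⟨by linarith, by linarith⟩ ⟨by linarith, h2le⟩ h12
      linarith
    have hu1 : u ≤ π/4 + Real.arcsin ρ1/2 := by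
      have := Real.monotone_arcsin h1c
      rw [harcsin] at this; linarith
    have hF := Ff_mono hu hTu
      (Set.mem_Icc.2 ⟨hu1, u_le⟩)
      (Set.mem_Icc.2 ⟨by linarith, u_le⟩) hu12
    rw [gwRatio_eq h1m (by linarith), gwRatio_eq (by linarith) h2le]
    have h2π : (0:ℝ) < 2/π := by positivity
    exact mul_lt_mul_of_pos_left hF h2π

end GWAux

open GWAux in
/-- There is an absolute constant `δ > 0` such that for every minimizer `ρ*` of the GW
ratio on `(-1,1]` and every `ρ ∈ [-1,1]` with `|ρ - ρ*| ≥ 0.01`, one has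
`1 + (2/π) arcsin ρ ≥ (α_GW + δ)(1 + ρ)`. -/
theorem gw_ratio_gain_away_from_minimizer :
    ∃ δ : ℝ, δ > 0 ∧ ∀ ρstar : ℝ, ρstar ∈ Set.Ioc (-1 : ℝ) 1 →
      (∀ ρ ∈ Set.Ioc (-1 : ℝ) 1, gwRatio ρstar ≤ gwRatio ρ) →
      ∀ ρ ∈ Set.Icc (-1 : ℝ) 1, 0.01 ≤ |ρ - ρstar| →
        1 + 2 / Real.pi * Real.arcsin ρ ≥ (alphaGW + δ) * (1 + ρ) := by
  obtain ⟨c, hc0, hc95, hanti, hmono⟩ := gw_key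
  have hπ : (0:ℝ) < Real.pi := Real.pi_pos
  have hmemc : c ∈ Set.Ioc (-1:ℝ) 1 := ⟨by linarith, by linarith⟩
  refine ⟨min (gwRatio (c-0.01) - gwRatio c) (gwRatio (c+0.01) - gwRatio c), ?_, ?_⟩
  · apply lt_min
    · have := hanti (c-0.01) c (by linarith) (by linarith) le_rfl; linarith
    · have := hmono c (c+0.01) le_rfl (by linarith) (by linarith); linarith
  · intro ρstar hρstar hmin ρ hρ hdist
    have hρstar_eq : ρstar = c := by
      rcases lt_trichotomy ρstar c with h | h | h
      · have h1 := hanti ρstar c hρstar.1 h le_rfl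
        have h2 := hmin c hmemc
        linarith
      · exact h
      · have h1 := hmono c ρstar le_rfl h hρstar.2
        have h2 := hmin c hmemc
        linarith
    subst hρstar_eq
    have hα : alphaGW = gwRatio ρstar := by
      apply IsLeast.csInf_eq
      refine ⟨⟨ρstar, hρstar, rfl⟩, ?_⟩
      rintro x ⟨y, hy, rfl⟩
      exact hmin y hy
    rcases eq_or_lt_of_le hρ.1 with heq | hlt
    · rw [← heq, Real.arcsin_neg_one]
      have h0 : 1 + 2 / Real.pi * -(Real.pi/2) = 0 := by field_simp; ring
      rw [h0]
      norm_num
    · have hged : alphaGW + min (gwRatio (ρstar-0.01) - gwRatio ρstar)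
          (gwRatio (ρstar+0.01) - gwRatio ρstar) ≤ gwRatio ρ := by
        rcases le_abs.1 hdist with h | h
        · -- ρ ≥ ρstar + 0.01
          have hge : gwRatio (ρstar+0.01) ≤ gwRatio ρ := by
            rcases eq_or_lt_of_le (by linarith : ρstar+0.01 ≤ ρ) with he | hlt2
            · rw [he]
            · exact (hmono (ρstar+0.01) ρ (by linarith) hlt2 hρ.2).le
          have hm := min_le_right (gwRatio (ρstar-0.01) - gwRatio ρstar)
            (gwRatio (ρstar+0.01) - gwRatio ρstar)
          rw [hα]; linarith
        · -- ρ ≤ ρstar - 0.01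
          have hge : gwRatio (ρstar-0.01) ≤ gwRatio ρ := by
            rcases eq_or_lt_of_le (by linarith : ρ ≤ ρstar-0.01) with he | hlt2
            · rw [← he]
            · exact (hanti ρ (ρstar-0.01) hlt hlt2 (by linarith)).le
          have hm := min_le_left (gwRatio (ρstar-0.01) - gwRatio ρstar)
            (gwRatio (ρstar+0.01) - gwRatio ρstar)
          rw [hα]; linarith
      have h1ρ : (0:ℝ) < 1 + ρ := by linarith
      have hrw : 1 + 2 / Real.pi * Real.arcsin ρ = gwRatio ρ * (1+ρ) := by
        rw [gwRatio, div_mul_cancel₀ _ (by linarith : (1:ℝ) + ρ ≠ 0)]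
      rw [hrw]
      exact mul_le_mul_of_nonneg_right hged h1ρ.le
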